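/- Fix K ≥ 2, B > 0 and a label index k' ∈ {1,…,K}. For z ∈ ℝ^K define the cross-entropy loss ℓ(z) = −log(exp(z_{k'}) / Σ_{j=1}^K exp(z_j)). Then for all z, z' ∈ ℝ^K with |z_k| ≤ B and |z'_k| ≤ B for every k, one has |ℓ(z) − ℓ(z')| ≤ ((K−1)/(K−1 + exp(−2B))) Σ_{k=1}^K |z_k − z'_k|. -/

import Mathlib

open Real Finset

private lemma tele_aux (h : ℕ → ℝ) : ∀ n, |h 0 - h n| ≤ ∑ i ∈ Finset.range n, |h i - h (i+1)| := by
  intro n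
  induction n with
  | zero => simp
  | succ n ih =>
    rw [Finset.sum_range_succ]
    calc |h 0 - h (n+1)| ≤ |h 0 - h n| + |h n - h (n+1)| := abs_sub_le _ _ _
    _ ≤ _ := by linarith

private lemma step_lemma (K : ℕ) (hK : 2 ≤ K) (B : ℝ) (hB : 0 < B) (k' k : Fin K)
    (w : Fin K → ℝ) (hw : ∀ j, |w j| ≤ B) (a b : ℝ) (ha : |a| ≤ B) (hb : |b| ≤ B) :
    |(Real.log (∑ j, Real.exp (Function.update w k a j)) - Function.update w k a k') -
     (Real.log (∑ j, Real.exp (Function.update w k b j)) - Function.update w k b k')| ≤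
    ((K:ℝ) - 1) / ((K:ℝ) - 1 + Real.exp (-2*B)) * |a - b| := by
  set C : ℝ := ((K:ℝ) - 1) / ((K:ℝ) - 1 + Real.exp (-2*B)) with hC
  set S : ℝ := ∑ j ∈ Finset.univ \ {k}, Real.exp (w j) with hSdef
  have hK1 : (1:ℝ) ≤ (K:ℝ) - 1 := by
    have : (2:ℝ) ≤ (K:ℝ) := by exact_mod_cast hK
    linarith
  have hE1 : Real.exp B * Real.exp (-B) = 1 := by
    rw [← Real.exp_add]; simp
  have hE2 : Real.exp (-2*B) = Real.exp (-B) * Real.exp (-B) := by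
    rw [← Real.exp_add]; ring_nf
  have hE3 : Real.exp B * Real.exp (-2*B) = Real.exp (-B) := by
    rw [← Real.exp_add]; ring_nf
  have hdenpos : 0 < (K:ℝ) - 1 + Real.exp (-2*B) := by
    have := Real.exp_pos (-2*B); linarith
  -- S bounds
  have hcard : ((Finset.univ \ {k} : Finset (Fin K)).card : ℝ) = (K:ℝ) - 1 := by
    rw [← Finset.erase_eq, Finset.card_erase_of_mem (Finset.mem_univ k)]
    rw [Finset.card_univ, Fintype.card_fin]
    have : 1 ≤ K := by omega
    push_cast [Nat.cast_sub this]
    ring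
  have hSnonneg : 0 ≤ S := Finset.sum_nonneg fun j _ => (Real.exp_pos _).le
  have hSle : S ≤ ((K:ℝ) - 1) * Real.exp B := by
    calc S ≤ ∑ j ∈ Finset.univ \ {k}, Real.exp B := by
          apply Finset.sum_le_sum
          intro j _
          exact Real.exp_le_exp.mpr ((abs_le.mp (hw j)).2)
    _ = ((K:ℝ) - 1) * Real.exp B := by rw [Finset.sum_const, nsmul_eq_mul, hcard]
  have hsum : ∀ t : ℝ, ∑ j, Real.exp (Function.update w k t j) = Real.exp t + S := by
    intro t
    have h1 : ∀ j, Real.exp (Function.update w k t j) =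
        Function.update (fun j => Real.exp (w j)) k (Real.exp t) j := by
      intro j
      exact Function.apply_update (fun _ x => Real.exp x) w k t j
    simp_rw [h1]
    rw [Finset.sum_update_of_mem (Finset.mem_univ k)]
  have hSk'all : k' ≠ k → Real.exp (-B) ≤ S := by
    intro hkk
    have hmem : k' ∈ Finset.univ \ {k} := by simp [hkk]
    calc Real.exp (-B) ≤ Real.exp (w k') :=
          Real.exp_le_exp.mpr (by linarith [(abs_le.mp (hw k')).1])
    _ ≤ S := Finset.single_le_sum (fun j _ => (Real.exp_pos (w j)).le) hmem
  clear_value S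
  set f : ℝ → ℝ := fun t => Real.log (Real.exp t + S) - (if k' = k then t else w k') with hf
  have hfL : ∀ t : ℝ, Real.log (∑ j, Real.exp (Function.update w k t j)) -
      Function.update w k t k' = f t := by
    intro t
    rw [hsum t, hf]
    simp only [Function.update_apply]
  have hpos : ∀ t : ℝ, 0 < Real.exp t + S := fun t => by
    have := Real.exp_pos t; linarith
  have hf' : ∀ t : ℝ, HasDerivAt f
      (Real.exp t / (Real.exp t + S) - (if k' = k then 1 else 0)) t := by
    intro t
    have h1 : HasDerivAt (fun t => Real.exp t + S) (Real.exp t) t :=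
      (Real.hasDerivAt_exp t).add_const S
    have h2 : HasDerivAt (fun t => Real.log (Real.exp t + S))
        (Real.exp t / (Real.exp t + S)) t := h1.log (ne_of_gt (hpos t))
    by_cases hkk : k' = k
    · simp only [hf, hkk, if_pos rfl, if_true]
      exact h2.sub (hasDerivAt_id' t)
    · simp only [hf, if_neg hkk]
      simpa using h2.sub_const (w k')
  have hCnonneg : 0 ≤ C := by
    rw [hC]; positivity
  have hbound : ∀ t : ℝ, |t| ≤ B →
      |Real.exp t / (Real.exp t + S) - (if k' = k then 1 else 0)| ≤ C := by
    intro t ht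
    have htB := abs_le.mp ht
    have het1 : Real.exp (-B) ≤ Real.exp t := Real.exp_le_exp.mpr (by linarith [htB.1])
    have het2 : Real.exp t ≤ Real.exp B := Real.exp_le_exp.mpr htB.2
    have hetpos := Real.exp_pos t
    by_cases hkk : k' = k
    · rw [if_pos hkk]
      have heq : Real.exp t / (Real.exp t + S) - 1 = -(S / (Real.exp t + S)) := by
        field_simp
        ring
      rw [heq, abs_neg, abs_of_nonneg (div_nonneg hSnonneg (hpos t).le)]
      rw [hC, div_le_div_iff₀ (hpos t) hdenpos]
      have h1 : S * Real.exp (-2*B) ≤ ((K:ℝ)-1) * Real.exp B * Real.exp (-2*B) :=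
        mul_le_mul_of_nonneg_right hSle (Real.exp_pos _).le
      have h2 : ((K:ℝ)-1) * Real.exp B * Real.exp (-2*B) = ((K:ℝ)-1) * Real.exp (-B) := by
        rw [mul_assoc, hE3]
      have h3 : ((K:ℝ)-1) * Real.exp (-B) ≤ ((K:ℝ)-1) * Real.exp t :=
        mul_le_mul_of_nonneg_left het1 (by linarith)
      have h4 : S * Real.exp (-2*B) ≤ ((K:ℝ)-1) * Real.exp t := by linarith
      nlinarith [h4]
    · rw [if_neg hkk, sub_zero, abs_of_nonneg (div_nonneg (Real.exp_pos t).le (hpos t).le)]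
      have hSk' : Real.exp (-B) ≤ S := hSk'all hkk
      rw [hC, div_le_div_iff₀ (hpos t) hdenpos]
      have h1 : Real.exp t * Real.exp (-2*B) ≤ Real.exp B * Real.exp (-2*B) :=
        mul_le_mul_of_nonneg_right het2 (Real.exp_pos _).le
      have h2 : S ≤ ((K:ℝ)-1) * S := by nlinarith [hSnonneg]
      have h4 : Real.exp t * Real.exp (-2*B) ≤ ((K:ℝ)-1) * S := by linarith
      nlinarith [h4]
  have main : ∀ u v : ℝ, |u| ≤ B → |v| ≤ B → u < v → |f u - f v| ≤ C * |u - v| := by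
    intro u v hu hv huv
    have hcont : ContinuousOn f (Set.Icc u v) := fun x _ =>
      ((hf' x).differentiableAt.continuousAt).continuousWithinAt
    obtain ⟨c, hc, hceq⟩ := exists_hasDerivAt_eq_slope f _ huv hcont (fun x _ => hf' x)
    have hcB : |c| ≤ B := by
      rw [abs_le]
      constructor
      · linarith [(abs_le.mp hu).1, hc.1]
      · linarith [(abs_le.mp hv).2, hc.2]
    have hfd : f v - f u = (Real.exp c / (Real.exp c + S) - (if k' = k then 1 else 0)) * (v - u) := by
      rw [hceq, div_mul_cancel₀ _ (sub_ne_zero.mpr huv.ne')]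
    have : |f u - f v| = |Real.exp c / (Real.exp c + S) - (if k' = k then 1 else 0)| * |v - u| := by
      rw [← abs_neg (f u - f v), neg_sub, hfd, abs_mul]
    rw [this, abs_sub_comm u v]
    exact mul_le_mul_of_nonneg_right (hbound c hcB) (abs_nonneg _)
  rw [hfL a, hfL b]
  rcases lt_trichotomy a b with h | h | h
  · exact main a b ha hb h
  · simp [h]
  · rw [abs_sub_comm (f a) (f b), abs_sub_comm a b]
    exact main b a hb ha h


/-- paper's Lemma 8. The softmax cross-entropy loss
`ℓ(z) = −log(exp(z_{k'}) / Σ_j exp(z_j))`, restricted to score vectors with coordinates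
bounded by `B` in absolute value, is Lipschitz in the `ℓ₁` norm with constant
`(K−1)/(K−1 + exp(−2B))`. -/
theorem stmt_15 (K : ℕ) (hK : 2 ≤ K) (B : ℝ) (hB : 0 < B) (k' : Fin K)
    (ℓ : (Fin K → ℝ) → ℝ)
    (hℓ : ∀ z, ℓ z = -Real.log (Real.exp (z k') / ∑ j, Real.exp (z j)))
    (z z' : Fin K → ℝ) (hz : ∀ k, |z k| ≤ B) (hz' : ∀ k, |z' k| ≤ B) :
    |ℓ z - ℓ z'| ≤
      ((K : ℝ) - 1) / ((K : ℝ) - 1 + Real.exp (-2 * B)) * ∑ k, |z k - z' k| := by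
  set C : ℝ := ((K:ℝ) - 1) / ((K:ℝ) - 1 + Real.exp (-2*B)) with hC
  have hCnonneg : 0 ≤ C := by
    have : (2:ℝ) ≤ (K:ℝ) := by exact_mod_cast hK
    have := Real.exp_pos (-2*B)
    rw [hC]
    apply div_nonneg <;> linarith
  have hLeq : ∀ v : Fin K → ℝ, ℓ v = Real.log (∑ j, Real.exp (v j)) - v k' := by
    intro v
    have hpos : 0 < ∑ j, Real.exp (v j) :=
      Finset.sum_pos (fun j _ => Real.exp_pos _) ⟨k', Finset.mem_univ k'⟩
    rw [hℓ v, Real.log_div (Real.exp_ne_zero _) (ne_of_gt hpos), Real.log_exp]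
    ring
  set g : ℕ → Fin K → ℝ := fun i j => if (j:ℕ) < i then z' j else z j with hg
  have hg0 : g 0 = z := by funext j; simp [hg]
  have hgK : g K = z' := by funext j; simp [hg, j.isLt]
  have hgbox : ∀ i j, |g i j| ≤ B := by
    intro i j
    by_cases h : (j:ℕ) < i <;> simp [hg, h, hz j, hz' j]
  set h : ℕ → ℝ := fun i => Real.log (∑ j, Real.exp (g i j)) - g i k' with hh
  have key : ∀ i (hi : i < K), |h i - h (i+1)| ≤ C * |z ⟨i, hi⟩ - z' ⟨i, hi⟩| := by
    intro i hi
    set ki : Fin K := ⟨i, hi⟩ with hki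
    have e1 : g i = Function.update (g i) ki (z ki) := by
      funext j
      rcases eq_or_ne j ki with rfl | hne
      · simp [Function.update_apply, hg, hki]
      · simp [Function.update_apply, hne]
    have e2 : g (i+1) = Function.update (g i) ki (z' ki) := by
      funext j
      rcases eq_or_ne j ki with rfl | hne
      · simp [Function.update_apply, hg, hki]
      · have hjv : (j:ℕ) ≠ i := fun hc => hne (Fin.ext (by simp [hki, hc]))
        have : ((j:ℕ) < i + 1) ↔ ((j:ℕ) < i) := by omega
        simp [Function.update_apply, hne, hg, this]
    have hst := step_lemma K hK B hB k' ki (g i) (hgbox i) (z ki) (z' ki) (hz ki) (hz' ki)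
    rw [← e1, ← e2] at hst
    rw [hh]
    exact hst
  have htele := tele_aux h K
  rw [hh] at htele
  simp only [hg0, hgK] at htele
  have hsum2 : ∑ i ∈ Finset.range K, |h i - h (i+1)| ≤ C * ∑ k, |z k - z' k| := by
    have : C * ∑ k, |z k - z' k| = ∑ i ∈ Finset.range K,
        (fun i => if hi : i < K then C * |z ⟨i, hi⟩ - z' ⟨i, hi⟩| else 0) i := by
      rw [← Fin.sum_univ_eq_sum_range]
      rw [Finset.mul_sum]
      apply Finset.sum_congr rfl
      intro x _
      simp [x.isLt]
    rw [this]
    apply Finset.sum_le_sum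
    intro i hi
    have hiK : i < K := Finset.mem_range.mp hi
    rw [dif_pos hiK]
    exact key i hiK
  calc |ℓ z - ℓ z'| = |h 0 - h K| := by rw [hh]; simp only [hg0, hgK, hLeq z, hLeq z']
  _ ≤ ∑ i ∈ Finset.range K, |h i - h (i+1)| := tele_aux h K
  _ ≤ C * ∑ k, |z k - z' k| := hsum2
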